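/- Let φ ∈ ℝ[z₁,z₂], let ν ≥ 1, and suppose z₂^ν divides φ. If the operator T = T_{[−1,1]²} is of restricted weak type (p,q) for some 1 ≤ p, q ≤ ∞, then 1/q ≥ 1/p − 1/(ν + 1). -/

import Mathlib

open MeasureTheory MvPolynomial
open scoped ENNReal

/-- The averaging operator `T_R f(x) = ∫_R f(x₁ − t₁, x₂ − t₂, x₃ − φ(t)) dt`
acting on nonnegative measurable functions on ℝ³. -/
noncomputable def avgOp (φ : ℝ × ℝ → ℝ) (R : Set (ℝ × ℝ))
    (f : ℝ × ℝ × ℝ → ℝ≥0∞) (x : ℝ × ℝ × ℝ) : ℝ≥0∞ :=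
  ∫⁻ t in R, f (x.1 - t.1, x.2.1 - t.2, x.2.2 - φ t)

/-- The bilinear pairing `⟨T_R χ_E, χ_F⟩`. -/
noncomputable def pairing (φ : ℝ × ℝ → ℝ) (R : Set (ℝ × ℝ))
    (E F : Set (ℝ × ℝ × ℝ)) : ℝ≥0∞ :=
  ∫⁻ x, avgOp φ R (E.indicator 1) x * F.indicator 1 x

/-- `T_R` is of restricted weak type `(p,q)`, written in terms of the reciprocals
`pinv = 1/p`, `qinv = 1/q` (so `1 ≤ p, q ≤ ∞` corresponds to `pinv, qinv ∈ [0,1]`):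
there is `C < ∞` with `⟨T_R χ_E, χ_F⟩ ≤ C |E|^{1/p} |F|^{1−1/q}` for all measurable
`E, F ⊆ ℝ³` of finite measure. -/
def RWT (φ : ℝ × ℝ → ℝ) (R : Set (ℝ × ℝ)) (pinv qinv : ℝ) : Prop :=
  ∃ C : ℝ, 0 ≤ C ∧ ∀ E F : Set (ℝ × ℝ × ℝ), MeasurableSet E → MeasurableSet F →
    volume E < ⊤ → volume F < ⊤ →
    pairing φ R E F ≤ ENNReal.ofReal C * volume E ^ pinv * volume F ^ (1 - qinv)

/-- The unit square `[−1,1]²` in ℝ². -/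
def unitSquare : Set (ℝ × ℝ) := Set.Icc ((-1, -1) : ℝ × ℝ) (1, 1)

lemma exp_compare {a b c K : ℝ} (hc : 0 < c) (hK : 0 ≤ K)
    (h : ∀ δ : ℝ, 0 < δ → δ ≤ 1 → c * δ ^ a ≤ K * δ ^ b) : b ≤ a := by
  by_contra hab
  push_neg at hab
  set e := b - a with he
  have he0 : 0 < e := by linarith
  set δ := min 1 ((c / (K + 1)) ^ (1 / e)) with hδ
  have hbase : 0 < (c / (K + 1)) ^ (1 / e) :=
    Real.rpow_pos_of_pos (by positivity) _
  have hδ0 : 0 < δ := lt_min one_pos hbase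
  have hδ1 : δ ≤ 1 := min_le_left _ _
  have h1 := h δ hδ0 hδ1
  have hδe : δ ^ e ≤ c / (K + 1) := by
    calc δ ^ e ≤ ((c / (K + 1)) ^ (1 / e)) ^ e :=
          Real.rpow_le_rpow hδ0.le (min_le_right _ _) he0.le
      _ = (c / (K + 1)) ^ ((1 / e) * e) := by
          rw [← Real.rpow_mul (by positivity)]
      _ = c / (K + 1) := by
          rw [one_div, inv_mul_cancel₀ he0.ne', Real.rpow_one]
  have hsplit : δ ^ b = δ ^ a * δ ^ e := by
    rw [← Real.rpow_add hδ0, he]; ring_nf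
  have hpa : 0 < δ ^ a := Real.rpow_pos_of_pos hδ0 _
  have h2 : c ≤ K * δ ^ e := by
    rw [hsplit] at h1
    exact le_of_mul_le_mul_right (by linarith [h1] : c * δ ^ a ≤ (K * δ ^ e) * δ ^ a) hpa
  have h3 : K * δ ^ e ≤ K * (c / (K + 1)) := mul_le_mul_of_nonneg_left hδe hK
  have h4 : K * (c / (K + 1)) < c := by
    rw [mul_div_assoc'] at *
    rw [div_lt_iff₀ (by positivity)]
    nlinarith
  linarith

/-- If `z₂^ν` divides φ (ν ≥ 1) and `T = T_{[−1,1]²}` is of restricted weak type `(p,q)`,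
then `1/q ≥ 1/p − 1/(ν+1)`. -/
theorem stmt_11 (φp : MvPolynomial (Fin 2) ℝ) (ν : ℕ) (hν : 1 ≤ ν)
    (hdvd : (X 1 : MvPolynomial (Fin 2) ℝ) ^ ν ∣ φp)
    (pinv qinv : ℝ) (hp0 : 0 ≤ pinv) (hp1 : pinv ≤ 1) (hq0 : 0 ≤ qinv) (hq1 : qinv ≤ 1)
    (hrwt : RWT (fun t => eval ![t.1, t.2] φp) unitSquare pinv qinv) :
    pinv - 1 / ((ν : ℝ) + 1) ≤ qinv := by
  obtain ⟨ψ, hψ⟩ := hdvd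
  set φ : ℝ × ℝ → ℝ := fun t => eval ![t.1, t.2] φp with hφ
  set g : ℝ × ℝ → ℝ := fun t => eval ![t.1, t.2] ψ with hg
  -- φ t = t.2 ^ ν * g t
  have hφeq : ∀ t : ℝ × ℝ, φ t = t.2 ^ ν * g t := by
    intro t
    simp [hφ, hg, hψ, map_mul, map_pow]
  -- bound on g over unitSquare
  have hgcont : Continuous g := by
    have hvec : Continuous fun t : ℝ × ℝ => ![t.1, t.2] := by
      apply continuous_pi
      intro i
      fin_cases i
      · simpa using continuous_fst
      · simpa using continuous_snd
    exact (MvPolynomial.continuous_eval ψ).comp hvec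
  obtain ⟨B, hB⟩ := (isCompact_Icc (a := ((-1,-1) : ℝ×ℝ)) (b := (1,1))).exists_bound_of_continuousOn
    hgcont.continuousOn
  set M : ℝ := max B 1 with hM
  have hM1 : 1 ≤ M := le_max_right _ _
  have hM0 : 0 < M := lt_of_lt_of_le one_pos hM1
  have hgM : ∀ t : ℝ × ℝ, t ∈ unitSquare → |g t| ≤ M := by
    intro t ht
    calc |g t| = ‖g t‖ := (Real.norm_eq_abs _).symm
      _ ≤ B := hB t ht
      _ ≤ M := le_max_left _ _
  obtain ⟨C, hC0, hC⟩ := hrwt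
  -- The key inequality for each δ ∈ (0,1]
  have key : ∀ δ : ℝ, 0 < δ → δ ≤ 1 →
      δ * (2 * M * δ ^ (ν + 1)) ≤
        C * (16 * M * δ ^ (ν + 1)) ^ pinv * (2 * M * δ ^ (ν + 1)) ^ (1 - qinv) := by
    intro δ hδ0 hδ1
    set S : Set (ℝ × ℝ) := Set.Icc (0, 0) (1, δ) with hS
    set E : Set (ℝ × ℝ × ℝ) :=
      Set.Icc (-1, -δ, -(2 * M * δ ^ ν)) (1, δ, 2 * M * δ ^ ν) with hE
    set F : Set (ℝ × ℝ × ℝ) :=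
      Set.Icc (0, 0, -(M * δ ^ ν)) (1, δ, M * δ ^ ν) with hF
    have hMδ : 0 < M * δ ^ ν := by positivity
    have hvolE : volume E = ENNReal.ofReal (16 * M * δ ^ (ν + 1)) := by
      rw [hE]
      simp only [Set.Icc_prod_eq, Measure.volume_eq_prod, Measure.prod_prod, Real.volume_Icc]
      rw [← ENNReal.ofReal_mul (by linarith), ← ENNReal.ofReal_mul (by positivity)]
      congr 1
      ring
    have hvolF : volume F = ENNReal.ofReal (2 * M * δ ^ (ν + 1)) := by
      rw [hF]
      simp only [Set.Icc_prod_eq, Measure.volume_eq_prod, Measure.prod_prod, Real.volume_Icc]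
      rw [← ENNReal.ofReal_mul (by linarith), ← ENNReal.ofReal_mul (by positivity)]
      congr 1
      ring
    have hvolS : volume S = ENNReal.ofReal δ := by
      rw [hS]
      simp only [Set.Icc_prod_eq, Measure.volume_eq_prod, Measure.prod_prod, Real.volume_Icc]
      rw [← ENNReal.ofReal_mul (by norm_num)]
      norm_num
    -- membership: shifted points land in E
    have hmem : ∀ x ∈ F, ∀ t ∈ S, (x.1 - t.1, x.2.1 - t.2, x.2.2 - φ t) ∈ E := by
      intro x hx t ht
      simp only [hF, hS, hE, Set.mem_Icc, Prod.le_def] at hx ht ⊢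
      obtain ⟨⟨hx1l, hx2l, hx3l⟩, hx1u, hx2u, hx3u⟩ := hx
      obtain ⟨⟨ht1l, ht2l⟩, ht1u, ht2u⟩ := ht
      have htU : t ∈ unitSquare := by
        simp only [unitSquare, Set.mem_Icc, Prod.le_def]
        refine ⟨⟨by linarith, by linarith⟩, by linarith, by linarith⟩
      have hφt : |φ t| ≤ M * δ ^ ν := by
        rw [hφeq t, abs_mul, abs_pow]
        have h1 : |t.2| ^ ν ≤ δ ^ ν := by
          apply pow_le_pow_left₀ (abs_nonneg _)
          exact abs_le.mpr ⟨by linarith, ht2u⟩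
        calc |t.2| ^ ν * |g t| ≤ δ ^ ν * M :=
              mul_le_mul h1 (hgM t htU) (abs_nonneg _) (by positivity)
          _ = M * δ ^ ν := by ring
      obtain ⟨hφl, hφu⟩ := abs_le.mp hφt
      refine ⟨⟨by linarith, by linarith, by linarith⟩, by linarith, by linarith, by linarith⟩
    -- pairing lower bound
    have hFm : MeasurableSet F := measurableSet_Icc
    have hSm : MeasurableSet S := measurableSet_Icc
    have hSsub : S ⊆ unitSquare := by
      intro t ht
      simp only [hS, unitSquare, Set.mem_Icc, Prod.le_def] at ht ⊢
      obtain ⟨⟨ht1l, ht2l⟩, ht1u, ht2u⟩ := ht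
      refine ⟨⟨by linarith, by linarith⟩, by linarith, by linarith⟩
    have hpair : volume S * volume F ≤ pairing φ unitSquare E F := by
      have step1 : pairing φ unitSquare E F
          = ∫⁻ x in F, avgOp φ unitSquare (E.indicator 1) x := by
        rw [pairing, ← lintegral_indicator hFm]
        refine lintegral_congr fun x => ?_
        by_cases hx : x ∈ F <;> simp [hx]
      rw [step1, ← setLIntegral_const F (volume S)]
      refine setLIntegral_mono' hFm fun x hx => ?_
      calc volume S = ∫⁻ _ in S, 1 := (setLIntegral_one S).symm
        _ ≤ ∫⁻ t in S, E.indicator 1 (x.1 - t.1, x.2.1 - t.2, x.2.2 - φ t) := by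
            refine setLIntegral_mono' hSm fun t ht => ?_
            simp [Set.indicator_of_mem (hmem x hx t ht)]
        _ ≤ ∫⁻ t in unitSquare, E.indicator 1 (x.1 - t.1, x.2.1 - t.2, x.2.2 - φ t) :=
            lintegral_mono_set hSsub
        _ = avgOp φ unitSquare (E.indicator 1) x := rfl
    have happ := hC E F measurableSet_Icc measurableSet_Icc
      (by rw [hvolE]; exact ENNReal.ofReal_lt_top)
      (by rw [hvolF]; exact ENNReal.ofReal_lt_top)
    have hENN : ENNReal.ofReal (δ * (2 * M * δ ^ (ν + 1))) ≤
        ENNReal.ofReal (C * (16 * M * δ ^ (ν + 1)) ^ pinv * (2 * M * δ ^ (ν + 1)) ^ (1 - qinv)) := by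
      calc ENNReal.ofReal (δ * (2 * M * δ ^ (ν + 1)))
          = ENNReal.ofReal δ * ENNReal.ofReal (2 * M * δ ^ (ν + 1)) :=
            ENNReal.ofReal_mul hδ0.le
        _ = volume S * volume F := by rw [hvolS, hvolF]
        _ ≤ pairing φ unitSquare E F := hpair
        _ ≤ ENNReal.ofReal C * volume E ^ pinv * volume F ^ (1 - qinv) := happ
        _ = _ := by
            rw [hvolE, hvolF, ENNReal.ofReal_rpow_of_pos (by positivity),
              ENNReal.ofReal_rpow_of_pos (by positivity),
              ← ENNReal.ofReal_mul hC0, ← ENNReal.ofReal_mul (by positivity)]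
    exact (ENNReal.ofReal_le_ofReal_iff (by positivity)).mp hENN
  -- convert to clean power comparison
  have key2 : ∀ δ : ℝ, 0 < δ → δ ≤ 1 →
      (2 * M) * δ ^ ((ν : ℝ) + 2) ≤
        (C * (16 * M) ^ pinv * (2 * M) ^ (1 - qinv)) * δ ^ (((ν : ℝ) + 1) * (pinv + (1 - qinv))) := by
    intro δ hδ0 hδ1
    have h := key δ hδ0 hδ1
    have hpow : δ ^ (ν + 1) = δ ^ ((ν : ℝ) + 1) := by
      rw [← Real.rpow_natCast δ (ν + 1)]
      push_cast
      ring_nf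
    have hmulp : δ * δ ^ ((ν : ℝ) + 1) = δ ^ ((ν : ℝ) + 2) := by
      have h2 := Real.rpow_add hδ0 1 ((ν : ℝ) + 1)
      rw [Real.rpow_one] at h2
      rw [← h2]
      ring_nf
    have lhs_eq : δ * (2 * M * δ ^ (ν + 1)) = (2 * M) * δ ^ ((ν : ℝ) + 2) := by
      rw [hpow, ← hmulp]; ring
    have e1 : (16 * M * δ ^ (ν + 1) : ℝ) ^ pinv
        = (16 * M) ^ pinv * δ ^ (((ν : ℝ) + 1) * pinv) := by
      rw [hpow, Real.mul_rpow (by positivity) (Real.rpow_nonneg hδ0.le _),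
        ← Real.rpow_mul hδ0.le]
    have e2 : (2 * M * δ ^ (ν + 1) : ℝ) ^ (1 - qinv)
        = (2 * M) ^ (1 - qinv) * δ ^ (((ν : ℝ) + 1) * (1 - qinv)) := by
      rw [hpow, Real.mul_rpow (by positivity) (Real.rpow_nonneg hδ0.le _),
        ← Real.rpow_mul hδ0.le]
    have e3 : δ ^ (((ν : ℝ) + 1) * pinv) * δ ^ (((ν : ℝ) + 1) * (1 - qinv))
        = δ ^ (((ν : ℝ) + 1) * (pinv + (1 - qinv))) := by
      rw [← Real.rpow_add hδ0]
      congr 1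
      ring
    rw [← lhs_eq, ← e3]
    calc δ * (2 * M * δ ^ (ν + 1))
        ≤ C * (16 * M * δ ^ (ν + 1)) ^ pinv * (2 * M * δ ^ (ν + 1)) ^ (1 - qinv) := h
      _ = C * (16 * M) ^ pinv * (2 * M) ^ (1 - qinv)
          * (δ ^ (((ν : ℝ) + 1) * pinv) * δ ^ (((ν : ℝ) + 1) * (1 - qinv))) := by
          rw [e1, e2]; ring
  have hcomp := exp_compare (by linarith : (0:ℝ) < 2 * M)
    (mul_nonneg (mul_nonneg hC0 (Real.rpow_nonneg (by positivity) _))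
      (Real.rpow_nonneg (by positivity) _)) key2
  have hν1 : (0 : ℝ) < (ν : ℝ) + 1 := by positivity
  have h2 : pinv - qinv ≤ 1 / ((ν : ℝ) + 1) := by
    rw [le_div_iff₀ hν1]
    nlinarith
  linarith
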